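/- Let W ∈ ℝ^{n×n} be symmetric and θ ∈ ℝ^n, and define the energy function V(x) := (1/2) x^⊤(I − W)x − θ^⊤x. Then: (a) the gradient of V is ∇V(x) = x − (Wx + θ); (b) for every x ∈ ℝ^n with x_i ≥ 0 for all i, the derivative of V along the TLN vector field is nonpositive: ∇V(x)^⊤(−x + [Wx + θ]_+) = Σ_{i=1}^n (x_i − y_i)(−x_i + [y_i]_+) ≤ 0, where y = Wx + θ and [t]_+ = max(t,0). (Componentwise: for reals u ≥ 0 and v, (u − v)(−u + max(v,0)) ≤ 0.) -/

import Mathlib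

open Matrix

/-- For symmetric `W` and the energy function
`V(x) = ½ xᵀ(I−W)x − θᵀx` on `ℝⁿ` (with the Euclidean inner product):
(a) the gradient of `V` at `x` is `x − (Wx + θ)`;
(b) on the nonnegative orthant the derivative of `V` along the TLN vector
field, `∑ i (x_i − y_i)(−x_i + [y_i]₊)`, is nonpositive; componentwise, for
reals `u ≥ 0` and `v`, `(u − v)(−u + max v 0) ≤ 0`. -/
theorem tln_energy_gradient_and_decrease (n : ℕ)
    (W : Matrix (Fin n) (Fin n) ℝ) (hWsymm : W.IsSymm)
    (θ : Fin n → ℝ)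
    (V : EuclideanSpace ℝ (Fin n) → ℝ)
    (hV : ∀ x : EuclideanSpace ℝ (Fin n),
      V x = (1 / 2) * (∑ i, x i * (x i - W.mulVec x i)) - ∑ i, θ i * x i) :
    -- (a) gradient of V
    (∀ x : EuclideanSpace ℝ (Fin n),
      HasGradientAt V
        (WithLp.toLp 2 (fun j => x j - (W.mulVec x j + θ j) : Fin n → ℝ) :
          EuclideanSpace ℝ (Fin n)) x) ∧
    -- (b) decrease along the TLN vector field on the nonnegative orthant
    (∀ x : Fin n → ℝ, (∀ i, 0 ≤ x i) →
      (∑ i, (x i - (W.mulVec x i + θ i)) *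
        (-(x i) + max (W.mulVec x i + θ i) 0)) ≤ 0) ∧
    -- componentwise inequality
    (∀ u v : ℝ, 0 ≤ u → (u - v) * (-u + max v 0) ≤ 0) := by
  have comp : ∀ u v : ℝ, 0 ≤ u → (u - v) * (-u + max v 0) ≤ 0 := by
    intro u v hu
    rcases le_total v 0 with h | h
    · simp only [max_eq_right h]; nlinarith
    · rw [max_eq_left h]; nlinarith [sq_nonneg (u - v)]
  refine ⟨?_, ?_, comp⟩
  · intro x
    rw [hasGradientAt_iff_hasFDerivAt]
    set e := EuclideanSpace.equiv (Fin n) ℝ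
    set x' : Fin n → ℝ := fun i => x i with hx'
    -- derivative in plain Pi space
    set M : (Fin n → ℝ) →L[ℝ] (Fin n → ℝ) := LinearMap.toContinuousLinearMap W.mulVecLin with hM
    have hMapp : ∀ (y : Fin n → ℝ) i, M y i = W.mulVec y i := fun y i => rfl
    have hproj : ∀ i, HasFDerivAt (fun y : Fin n → ℝ => y i) (ContinuousLinearMap.proj (R := ℝ) i) x' :=
      fun i => hasFDerivAt_apply i x'
    have hMd : HasFDerivAt (fun y : Fin n → ℝ => W.mulVec y) M x' := M.hasFDerivAt
    have hMi : ∀ i, HasFDerivAt (fun y : Fin n → ℝ => W.mulVec y i)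
        ((ContinuousLinearMap.proj (R := ℝ) i).comp M) x' :=
      fun i => ((ContinuousLinearMap.proj (R := ℝ) i).comp M).hasFDerivAt
    have hterm : ∀ i, HasFDerivAt
        (fun y : Fin n → ℝ => (1/2 : ℝ) * (y i * (y i - W.mulVec y i)) - θ i * y i)
        ((1/2 : ℝ) • (x' i • (ContinuousLinearMap.proj i - (ContinuousLinearMap.proj (R := ℝ) i).comp M)
            + (x' i - W.mulVec x' i) • (ContinuousLinearMap.proj (R := ℝ) i))
          - θ i • ContinuousLinearMap.proj (R := ℝ) i) x' := by
      intro i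
      exact (((hproj i).mul ((hproj i).sub (hMi i))).const_mul (1/2)).sub ((hproj i).const_mul (θ i))
    have hsum : HasFDerivAt
        (fun y : Fin n → ℝ => ∑ i, ((1/2 : ℝ) * (y i * (y i - W.mulVec y i)) - θ i * y i))
        (∑ i, ((1/2 : ℝ) • (x' i • (ContinuousLinearMap.proj i - (ContinuousLinearMap.proj (R := ℝ) i).comp M)
            + (x' i - W.mulVec x' i) • (ContinuousLinearMap.proj (R := ℝ) i))
          - θ i • ContinuousLinearMap.proj (R := ℝ) i)) x' :=
      HasFDerivAt.fun_sum (fun i _ => hterm i)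
    have swap : ∀ h : Fin n → ℝ, ∑ i, x' i * W.mulVec h i = ∑ i, W.mulVec x' i * h i := by
      intro h
      simp only [mulVec, dotProduct, Finset.mul_sum, Finset.sum_mul]
      rw [Finset.sum_comm]
      refine Finset.sum_congr rfl fun j _ => Finset.sum_congr rfl fun i _ => ?_
      rw [← hWsymm.apply i j]; ring
    have hcomp : HasFDerivAt V
        ((∑ i, ((1/2 : ℝ) • (x' i • (ContinuousLinearMap.proj (R := ℝ) i - (ContinuousLinearMap.proj (R := ℝ) i).comp M)
            + (x' i - W.mulVec x' i) • (ContinuousLinearMap.proj (R := ℝ) i))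
          - θ i • ContinuousLinearMap.proj (R := ℝ) i)).comp
          (e.toContinuousLinearMap)) x := by
      have hVeq : V = (fun y : Fin n → ℝ =>
          ∑ i, ((1/2 : ℝ) * (y i * (y i - W.mulVec y i)) - θ i * y i)) ∘ ⇑e := by
        funext z
        rw [hV z]
        simp only [Function.comp_apply, Finset.mul_sum, Finset.sum_sub_distrib]
        rfl
      rw [hVeq]
      exact hsum.comp x (e.hasFDerivAt)
    refine hcomp.congr_fderiv ?_
    ext h
    simp only [ContinuousLinearMap.coe_comp', Function.comp_apply, ContinuousLinearMap.sum_apply,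
      ContinuousLinearMap.sub_apply, ContinuousLinearMap.smul_apply, ContinuousLinearMap.add_apply,
      ContinuousLinearMap.coe_sub', ContinuousLinearMap.proj_apply, smul_eq_mul,
      InnerProductSpace.toDual_apply_apply, PiLp.inner_apply, PiLp.toLp_apply, RCLike.inner_apply, starRingEnd_apply,
      star_trivial, ContinuousLinearEquiv.coe_coe, Pi.sub_apply]
    have hx'x : x' = x := rfl
    have hMh : ∀ i : Fin n, M (e h) i = W.mulVec h i := fun i => rfl
    have heh : ∀ i : Fin n, e h i = h i := fun i => rfl
    simp only [hMh, heh, hx'x]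
    have hswap := swap h
    rw [hx'x] at hswap
    have expand : ∀ i : Fin n,
        (1/2 : ℝ) * ((x : Fin n → ℝ) i * (h i - W.mulVec h i) + ((x : Fin n → ℝ) i - W.mulVec x i) * h i)
          - θ i * h i
        = ((x : Fin n → ℝ) i - (W.mulVec x i + θ i)) * h i
          + (1/2 : ℝ) * (W.mulVec x i * h i - (x : Fin n → ℝ) i * W.mulVec h i) := by
      intro i; ring
    simp only [expand]
    rw [Finset.sum_add_distrib, ← Finset.mul_sum, Finset.sum_sub_distrib, hswap, sub_self,
      mul_zero, add_zero]
    exact Finset.sum_congr rfl fun i _ => mul_comm _ _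
  · intro x hx
    refine Finset.sum_nonpos fun i _ => ?_
    exact comp (x i) (W.mulVec x i + θ i) (hx i)
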